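/- Let G be a simple graph, let C be a cycle in G, let e = {u, v} be an edge of C, and let P be a path in G from u to v of length at least 2 whose internal vertices are all disjoint from the vertices of C. Then there exists a cycle C' in G whose vertex set equals the union of the vertex set of C and the vertex set of P, and whose edge set equals the union of the edge set of P with the edge set of C minus e. (This is the correctness of one iteration of the Expansion Algorithm: σ_{i+1} := σ_i + P − e is again a cycle.) -/

import Mathlib

open SimpleGraph Walk List

namespace ExpAux

variable {V : Type*} {G : SimpleGraph V}

/-- In a cycle based at `a`, a dart whose tail is `a` must be the first dart. -/
lemma lemA {a b : V} {D : G.Walk a a} (hD : D.IsCycle) {d : G.Dart}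
    (hd : d ∈ D.darts) (h1 : d.fst = a) (h2 : d.snd = b) :
    ∃ (h : G.Adj a b) (Q : G.Walk b a), D = Walk.cons h Q := by
  cases D with
  | nil => simp at hd
  | @cons _ w _ h' q =>
    rw [Walk.darts_cons, List.mem_cons] at hd
    rcases hd with hd | hd
    · have hw : w = b := by rw [← h2, hd]
      subst hw
      exact ⟨h', q, rfl⟩
    · exfalso
      have hqpath : q.IsPath := ((Walk.cons_isCycle_iff q h').mp hD).1
      have ha : a ∈ q.darts.map (·.fst) := List.mem_map.mpr ⟨d, hd, h1⟩
      rw [Walk.map_fst_darts] at ha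
      have hsplit : q.support.dropLast ++ [a] = q.support := by
        have := q.support.dropLast_append_getLast (q.support_ne_nil)
        rwa [q.getLast_support] at this
      have hnodup := hqpath.support_nodup
      rw [← hsplit] at hnodup
      have := (List.nodup_append'.mp hnodup).2.2
      exact this ha (by simp)

/-- For a nonempty closed walk, membership in the support is equivalent to
membership in the tail of the support. -/
lemma mem_tail_of_closed {x : V} {c : G.Walk x x} (hc : c ≠ Walk.nil) {w : V} :
    w ∈ c.support ↔ w ∈ c.support.tail := by
  cases c with
  | nil => exact absurd rfl hc
  | cons h q =>
    simp only [Walk.support_cons, List.tail_cons, List.mem_cons]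
    constructor
    · rintro (rfl | hw)
      · exact q.end_mem_support
      · exact hw
    · exact Or.inr


/-- `s(a,b)` cannot be an edge of a path from `a` to `b` of length at least 2. -/
lemma edge_not_mem_path {a b : V} (hab : a ≠ b) {P : G.Walk a b} (hP : P.IsPath)
    (hlen : 2 ≤ P.length) : s(a, b) ∉ P.edges := by
  intro hmem
  cases P with
  | nil => simp at hlen
  | @cons _ c _ h0 P' =>
    rw [Walk.edges_cons, List.mem_cons] at hmem
    have hnodup := hP.support_nodup
    rw [Walk.support_cons, List.nodup_cons] at hnodup
    rcases hmem with heq | hmem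
    · have hc : c = b := by
        rw [Sym2.eq_iff] at heq
        rcases heq with ⟨-, h2⟩ | ⟨-, h2⟩
        · exact h2.symm
        · exact absurd h2.symm hab
      subst hc
      have hnil : P' ≠ Walk.nil := by
        intro h; rw [h] at hlen; simp at hlen
      have hb := (mem_tail_of_closed hnil).mp P'.start_mem_support
      have := hnodup.2
      rw [P'.support_eq_cons, List.nodup_cons] at this
      exact this.1 hb
    · exact hnodup.1 (P'.fst_mem_support_of_mem_edges hmem)

/-- Splicing a path `P : a ⟶ b` with the rest `Q : b ⟶ a` of a cycle `cons h Q`. -/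
lemma lemB {a b : V} (h : G.Adj a b) (Q : G.Walk b a)
    (hcyc : (Walk.cons h Q).IsCycle) (P : G.Walk a b) (hP : P.IsPath) (hlen : 2 ≤ P.length)
    (hint : ∀ w ∈ P.support, w ≠ a → w ≠ b → w ∉ (Walk.cons h Q).support) :
    (P.append Q).IsCycle ∧
    {z | z ∈ (P.append Q).support} = {z | z ∈ (Walk.cons h Q).support} ∪ {z | z ∈ P.support} ∧
    {e' | e' ∈ (P.append Q).edges} =
      {e' | e' ∈ P.edges} ∪ ({e' | e' ∈ (Walk.cons h Q).edges} \ {s(a, b)}) := by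
  obtain ⟨hQpath, hsabQ⟩ := (Walk.cons_isCycle_iff Q h).mp hcyc
  have hab : a ≠ b := h.ne
  have hsabP : s(a, b) ∉ P.edges := edge_not_mem_path hab hP hlen
  -- common vertices of P and Q are among {a, b}
  have common : ∀ w, w ∈ P.support → w ∈ Q.support → w = a ∨ w = b := by
    intro w hwP hwQ
    by_contra hcon
    push_neg at hcon
    exact hint w hwP hcon.1 hcon.2 (by rw [Walk.support_cons]; exact List.mem_cons_of_mem _ hwQ)
  -- edges of P and Q are disjoint
  have edis : ∀ e' ∈ P.edges, e' ∉ Q.edges := by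
    intro e' heP heQ
    induction e' using Sym2.ind with
    | _ p q =>
      have hpq : p ≠ q := G.ne_of_adj (P.adj_of_mem_edges heP)
      have hp : p = a ∨ p = b :=
        common p (P.fst_mem_support_of_mem_edges heP) (Q.fst_mem_support_of_mem_edges heQ)
      have hq : q = a ∨ q = b :=
        common q (P.snd_mem_support_of_mem_edges heP) (Q.snd_mem_support_of_mem_edges heQ)
      have : s(p, q) = s(a, b) := by
        rcases hp with rfl | rfl <;> rcases hq with rfl | rfl
        · exact absurd rfl hpq
        · rfl
        · exact Sym2.eq_swap
        · exact absurd rfl hpq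
      rw [this] at heQ
      exact hsabQ heQ
  have hPa : a ∉ P.support.tail := by
    have := hP.support_nodup
    rw [P.support_eq_cons, List.nodup_cons] at this
    exact this.1
  have hQb : b ∉ Q.support.tail := by
    have := hQpath.support_nodup
    rw [Q.support_eq_cons, List.nodup_cons] at this
    exact this.1
  refine ⟨⟨⟨?_, ?_⟩, ?_⟩, ?_, ?_⟩
  · -- trail
    rw [Walk.isTrail_def, Walk.edges_append, List.nodup_append']
    exact ⟨hP.isTrail.edges_nodup, hQpath.isTrail.edges_nodup, fun e' he1 he2 => edis e' he1 he2⟩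
  · -- nonempty
    intro hnil
    have := congrArg Walk.length hnil
    rw [Walk.length_append] at this
    simp only [Walk.length_nil] at this
    omega
  · -- support tail nodup
    rw [Walk.tail_support_append, List.nodup_append']
    refine ⟨hP.support_nodup.tail, hQpath.support_nodup.tail, ?_⟩
    intro w hw1 hw2
    have hwP : w ∈ P.support := List.mem_of_mem_tail hw1
    have hwQ : w ∈ Q.support := List.mem_of_mem_tail hw2
    rcases common w hwP hwQ with rfl | rfl
    · exact hPa hw1
    · exact hQb hw2
  · -- support set
    ext w
    simp only [Set.mem_setOf_eq, Set.mem_union, Walk.mem_support_append_iff, Walk.support_cons,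
      List.mem_cons]
    constructor
    · rintro (hw | hw)
      · exact Or.inr hw
      · exact Or.inl (Or.inr hw)
    · rintro ((rfl | hw) | hw)
      · exact Or.inl P.start_mem_support
      · exact Or.inr hw
      · exact Or.inl hw
  · -- edge set
    ext e'
    simp only [Set.mem_setOf_eq, Set.mem_union, Set.mem_diff, Set.mem_singleton_iff,
      Walk.edges_append, Walk.edges_cons, List.mem_append, List.mem_cons]
    constructor
    · rintro (he' | he')
      · exact Or.inl he'
      · refine Or.inr ⟨Or.inr he', fun hcon => ?_⟩
        rw [hcon] at he'
        exact hsabQ he'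
    · rintro (he' | ⟨(rfl | he'), hne⟩)
      · exact Or.inl he'
      · exact absurd rfl hne
      · exact Or.inr he'

end ExpAux


open ExpAux in
/-- One iteration of the Expansion Algorithm: replacing an edge `e = s(u,v)` of a cycle `C`
by a path `P` from `u` to `v` of length at least 2 whose internal vertices avoid `C`
yields again a cycle, with vertex set `V(C) ∪ V(P)` and edge set `E(P) ∪ (E(C) \ {e})`. -/
theorem expansion_step_is_cycle {V : Type*} (G : SimpleGraph V) {x u v : V}
    (C : G.Walk x x) (hC : C.IsCycle) (he : s(u, v) ∈ C.edges)
    (P : G.Walk u v) (hP : P.IsPath) (hlen : 2 ≤ P.length)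
    (hint : ∀ w ∈ P.support, w ≠ u → w ≠ v → w ∉ C.support) :
    ∃ (y : V) (C' : G.Walk y y), C'.IsCycle ∧
      {a | a ∈ C'.support} = {a | a ∈ C.support} ∪ {a | a ∈ P.support} ∧
      {e' | e' ∈ C'.edges} = {e' | e' ∈ P.edges} ∪ ({e' | e' ∈ C.edges} \ {s(u, v)}) := by
  classical
  obtain ⟨d, hd, hde⟩ := List.mem_map.mp (he : s(u,v) ∈ C.darts.map SimpleGraph.Dart.edge)
  have hde' : s(d.fst, d.snd) = s(u, v) := hde
  rcases Sym2.eq_iff.mp hde' with ⟨h1, h2⟩ | ⟨h1, h2⟩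
  · -- dart is (u, v): rotate at u
    have hu : u ∈ C.support := C.fst_mem_support_of_mem_edges he
    have hC₁ : (C.rotate u hu).IsCycle := hC.rotate hu
    have hdmem : d ∈ (C.rotate u hu).darts := (C.rotate_darts u hu).mem_iff.mpr hd
    obtain ⟨h', Q, hQeq⟩ := lemA hC₁ hdmem h1 h2
    have hsupp : ∀ w, w ∈ (C.rotate u hu).support ↔ w ∈ C.support := by
      intro w
      rw [mem_tail_of_closed hC.ne_nil, mem_tail_of_closed hC₁.ne_nil]
      exact (C.support_rotate u hu).mem_iff
    have hedge : ∀ e', e' ∈ (C.rotate u hu).edges ↔ e' ∈ C.edges :=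
      fun e' => (C.rotate_edges u hu).mem_iff
    obtain ⟨hcyc', hs, hE⟩ := lemB h' Q (hQeq ▸ hC₁) P hP hlen
      (fun w hw ha hb hmem => by
        rw [← hQeq] at hmem
        exact hint w hw ha hb ((hsupp w).mp hmem))
    refine ⟨u, P.append Q, hcyc', ?_, ?_⟩
    · rw [hs]
      congr 1
      ext w
      simp only [Set.mem_setOf_eq]
      rw [← hQeq]
      exact hsupp w
    · rw [hE]
      congr 2
      ext e'
      simp only [Set.mem_setOf_eq]
      rw [← hQeq]
      exact hedge e'
  · -- dart is (v, u): rotate at v, use P.reverse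
    have hv : v ∈ C.support := C.snd_mem_support_of_mem_edges he
    have hC₁ : (C.rotate v hv).IsCycle := hC.rotate hv
    have hdmem : d ∈ (C.rotate v hv).darts := (C.rotate_darts v hv).mem_iff.mpr hd
    obtain ⟨h', Q, hQeq⟩ := lemA hC₁ hdmem h1 h2
    have hsupp : ∀ w, w ∈ (C.rotate v hv).support ↔ w ∈ C.support := by
      intro w
      rw [mem_tail_of_closed hC.ne_nil, mem_tail_of_closed hC₁.ne_nil]
      exact (C.support_rotate v hv).mem_iff
    have hedge : ∀ e', e' ∈ (C.rotate v hv).edges ↔ e' ∈ C.edges :=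
      fun e' => (C.rotate_edges v hv).mem_iff
    obtain ⟨hcyc', hs, hE⟩ := lemB h' Q (hQeq ▸ hC₁) P.reverse hP.reverse
      (by rwa [SimpleGraph.Walk.length_reverse])
      (fun w hw ha hb hmem => by
        rw [← hQeq] at hmem
        rw [SimpleGraph.Walk.support_reverse, List.mem_reverse] at hw
        exact hint w hw hb ha ((hsupp w).mp hmem))
    refine ⟨v, P.reverse.append Q, hcyc', ?_, ?_⟩
    · rw [hs]
      ext w
      simp only [Set.mem_setOf_eq, Set.mem_union, SimpleGraph.Walk.support_reverse,
        List.mem_reverse]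
      rw [← hQeq]
      rw [hsupp w]
    · rw [hE]
      ext e'
      simp only [Set.mem_setOf_eq, Set.mem_union, Set.mem_diff, Set.mem_singleton_iff,
        SimpleGraph.Walk.edges_reverse, List.mem_reverse]
      rw [← hQeq]
      rw [hedge e', show s(v, u) = s(u, v) from Sym2.eq_swap]
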